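/- For every integer r ≥ 1, ((4r+2)(4r+3)⋯(24r)) / ((10r−1)! · (10r)!) < e^{25r}; equivalently, (24r)! / ((4r+1)! · (10r−1)! · (10r)!) < e^{25r}. -/

import Mathlib

open Real Finset

lemma binom_aux12 (x y : ℕ) : (x+y).choose x * (x^x * y^y) ≤ (x+y)^(x+y) := by
  have h := add_pow x y (x+y)
  have hm : x ∈ Finset.range (x+y+1) := by simp
  have h2 := Finset.single_le_sum (f := fun k => x^k * y^(x+y-k) * (x+y).choose k)
    (fun i _ => Nat.zero_le _) hm
  simp only [Nat.add_sub_cancel_left] at h2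
  calc (x+y).choose x * (x^x * y^y) = x^x * y^y * (x+y).choose x := by ring
    _ ≤ ∑ k ∈ Finset.range (x+y+1), x^k * y^(x+y-k) * (x+y).choose k := h2
    _ = (x+y)^(x+y) := h.symm

lemma helper1_12 (m : ℕ) (hm : 1 ≤ m) : Real.exp 1 * (m:ℝ)^(m+1) ≤ ((m:ℝ)+1)^(m+1) := by
  have hx : (0:ℝ) < m := by exact_mod_cast hm
  have hx1 : (0:ℝ) < (m:ℝ) + 1 := by linarith
  have h1 : Real.exp (1/((m:ℝ)+1)) ≤ ((m:ℝ)+1)/m := by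
    have h3 : (m:ℝ)/((m:ℝ)+1) ≤ (Real.exp (1/((m:ℝ)+1)))⁻¹ := by
      rw [← Real.exp_neg]
      calc (m:ℝ)/((m:ℝ)+1) = -(1/((m:ℝ)+1)) + 1 := by field_simp; ring
        _ ≤ _ := Real.add_one_le_exp _
    have h4 := inv_anti₀ (by positivity) h3
    rwa [inv_inv, inv_div] at h4
  have h4 : (Real.exp (1/((m:ℝ)+1)))^(m+1) ≤ (((m:ℝ)+1)/m)^(m+1) :=
    pow_le_pow_left₀ (Real.exp_pos _).le h1 _
  rw [← Real.exp_nat_mul,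
    show ((m+1 : ℕ):ℝ) * (1/((m:ℝ)+1)) = 1 by push_cast; field_simp, div_pow] at h4
  calc Real.exp 1 * (m:ℝ)^(m+1) ≤ (((m:ℝ)+1)^(m+1) / (m:ℝ)^(m+1)) * (m:ℝ)^(m+1) :=
        mul_le_mul_of_nonneg_right h4 (by positivity)
    _ = ((m:ℝ)+1)^(m+1) := by field_simp

lemma helper2_12 (m : ℕ) (hm : 1 ≤ m) : ((m:ℝ)+1)^m ≤ Real.exp 1 * (m:ℝ)^m := by
  have hx : (0:ℝ) < m := by exact_mod_cast hm
  have h1 : ((m:ℝ)+1)/m ≤ Real.exp (1/(m:ℝ)) := by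
    calc ((m:ℝ)+1)/m = 1/(m:ℝ) + 1 := by field_simp; ring
      _ ≤ _ := Real.add_one_le_exp _
  have h4 : (((m:ℝ)+1)/m)^m ≤ (Real.exp (1/(m:ℝ)))^m :=
    pow_le_pow_left₀ (by positivity) h1 _
  rw [← Real.exp_nat_mul, show ((m:ℕ):ℝ) * (1/(m:ℝ)) = 1 by field_simp, div_pow] at h4
  calc ((m:ℝ)+1)^m = (((m:ℝ)+1)^m / (m:ℝ)^m) * (m:ℝ)^m := by field_simp
    _ ≤ Real.exp 1 * (m:ℝ)^m := mul_le_mul_of_nonneg_right h4 (by positivity)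

/-- The estimate `J(r) < e^{25r}`:
`((4r+2)(4r+3)⋯(24r)) / ((10r−1)!(10r)!) = (24r)! / ((4r+1)!(10r−1)!(10r)!) < e^{25r}`. -/
theorem stmt12 (r : ℕ) (hr : 1 ≤ r) :
    (((24 * r).factorial : ℝ) /
        (((4 * r + 1).factorial : ℝ) * ((10 * r - 1).factorial : ℝ) *
          ((10 * r).factorial : ℝ)))
      < Real.exp (25 * (r : ℝ)) := by
  rcases lt_or_ge r 3 with h3 | h3
  · -- base cases r = 1, 2
    interval_cases r
    · have hE : (2.7182818283:ℝ)^(25:ℕ) ≤ Real.exp (25 * ((1:ℕ) : ℝ)) := by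
        calc (2.7182818283:ℝ)^(25:ℕ) ≤ (Real.exp 1)^(25:ℕ) :=
              pow_le_pow_left₀ (by norm_num) Real.exp_one_gt_d9.le _
          _ = Real.exp (25 * ((1:ℕ):ℝ)) := by rw [← Real.exp_nat_mul]; norm_num
      refine lt_of_lt_of_le ?_ hE
      rw [div_lt_iff₀ (by positivity)]
      norm_num [Nat.factorial]
    · have hE : (2.7182818283:ℝ)^(50:ℕ) ≤ Real.exp (25 * ((2:ℕ) : ℝ)) := by
        calc (2.7182818283:ℝ)^(50:ℕ) ≤ (Real.exp 1)^(50:ℕ) :=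
              pow_le_pow_left₀ (by norm_num) Real.exp_one_gt_d9.le _
          _ = Real.exp (25 * ((2:ℕ):ℝ)) := by rw [← Real.exp_nat_mul]; norm_num
      refine lt_of_lt_of_le ?_ hE
      rw [div_lt_iff₀ (by positivity)]
      norm_num [Nat.factorial]
  · -- general case r ≥ 3
    set x : ℝ := (r : ℝ) with hxdef
    have hx3 : (3:ℝ) ≤ x := by rw [hxdef]; exact_mod_cast h3
    have hx0 : (0:ℝ) < x := by linarith
    -- ℕ combinatorics
    set M : ℕ := (24*r).choose (4*r+1) * (20*r-1).choose (10*r-1) with hM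
    have d1 : 24*r - (4*r+1) = 20*r-1 := by omega
    have d2 : (20*r-1) - (10*r-1) = 10*r := by omega
    have e1 := Nat.choose_mul_factorial_mul_factorial (show 4*r+1 ≤ 24*r by omega)
    have e2 := Nat.choose_mul_factorial_mul_factorial (show 10*r-1 ≤ 20*r-1 by omega)
    rw [d1] at e1; rw [d2] at e2
    have hfac : (24*r).factorial =
        M * ((4*r+1).factorial * ((10*r-1).factorial * (10*r).factorial)) := by
      rw [hM, ← e1, ← e2]; ring
    have hL : (((24 * r).factorial : ℝ) /
        (((4 * r + 1).factorial : ℝ) * ((10 * r - 1).factorial : ℝ) *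
          ((10 * r).factorial : ℝ))) = (M:ℝ) := by
      have hA : ((4*r+1).factorial:ℝ) ≠ 0 := by
        exact_mod_cast (Nat.factorial_pos _).ne'
      have hB : ((10*r-1).factorial:ℝ) ≠ 0 := by
        exact_mod_cast (Nat.factorial_pos _).ne'
      have hC : ((10*r).factorial:ℝ) ≠ 0 := by
        exact_mod_cast (Nat.factorial_pos _).ne'
      rw [hfac]; push_cast; field_simp
    rw [hL]
    -- ℕ power bound
    have g1 := binom_aux12 (4*r+1) (20*r-1)
    rw [show 4*r+1 + (20*r-1) = 24*r from by omega] at g1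
    have g2 := binom_aux12 (10*r-1) (10*r)
    rw [show (10*r-1) + 10*r = 20*r-1 from by omega] at g2
    have hNpow : M * ((4*r+1)^(4*r+1) * ((10*r-1)^(10*r-1) * (10*r)^(10*r)))
        ≤ (24*r)^(24*r) := by
      calc M * ((4*r+1)^(4*r+1) * ((10*r-1)^(10*r-1) * (10*r)^(10*r)))
          = ((24*r).choose (4*r+1) * (4*r+1)^(4*r+1)) *
            ((20*r-1).choose (10*r-1) * ((10*r-1)^(10*r-1) * (10*r)^(10*r))) := by
            rw [hM]; ring
        _ ≤ ((24*r).choose (4*r+1) * (4*r+1)^(4*r+1)) * (20*r-1)^(20*r-1) :=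
            Nat.mul_le_mul_left _ g2
        _ = (24*r).choose (4*r+1) * ((4*r+1)^(4*r+1) * (20*r-1)^(20*r-1)) := by ring
        _ ≤ (24*r)^(24*r) := g1
    -- cast to ℝ
    have hRpow : (M:ℝ) * ((4*x+1)^(4*r+1) * ((10*x-1)^(10*r-1) * (10*x)^(10*r)))
        ≤ (24*x)^(24*r) := by
      have := (Nat.cast_le (α := ℝ)).mpr hNpow
      push_cast [Nat.cast_sub (show 1 ≤ 10*r by omega),
        Nat.cast_sub (show 1 ≤ 20*r by omega)] at this
      convert this using 2 <;> push_cast <;> ring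
    -- analytic bounds
    have hA : Real.exp 1 * (4*x)^(4*r+1) ≤ (4*x+1)^(4*r+1) := by
      have := helper1_12 (4*r) (by omega)
      push_cast at this
      convert this using 3 <;> ring
    have hB : (10*x)^(10*r-1) ≤ Real.exp 1 * (10*x-1)^(10*r-1) := by
      have := helper2_12 (10*r-1) (by omega)
      push_cast [Nat.cast_sub (show 1 ≤ 10*r by omega)] at this
      convert this using 2 <;> ring
    -- combine
    have hprod : (2/5) * ((4*x)^(4*r) * (10*x)^(20*r))
        ≤ (4*x+1)^(4*r+1) * ((10*x-1)^(10*r-1) * (10*x)^(10*r)) := by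
      have hpos1 : (0:ℝ) < 10*x-1 := by linarith
      have hstep : (4*x)^(4*r+1) * ((10*x)^(10*r-1) * (10*x)^(10*r))
          ≤ (4*x+1)^(4*r+1) * ((10*x-1)^(10*r-1) * (10*x)^(10*r)) := by
        have e' := Real.exp_pos 1
        nlinarith [mul_le_mul hA (mul_le_mul_of_nonneg_right hB (by positivity :
            (0:ℝ) ≤ (10*x)^(10*r))) (by positivity) (by positivity),
          mul_pos (pow_pos (show (0:ℝ) < 4*x by linarith) (4*r+1))
            (mul_pos (pow_pos (show (0:ℝ) < 10*x by linarith) (10*r-1))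
              (pow_pos (show (0:ℝ) < 10*x by linarith) (10*r)))]
      refine le_trans (le_of_eq ?_) hstep
      obtain ⟨b, hb1, hb2, hb3⟩ : ∃ b, 10*r-1 = b ∧ 10*r = b+1 ∧ 20*r = 2*b+2 :=
        ⟨10*r-1, rfl, by omega, by omega⟩
      rw [hb1, hb2, hb3]
      ring
    have hMbound : (M:ℝ) ≤ (5/2) * ((24:ℝ)^24/((4:ℝ)^4*(10:ℝ)^20))^r := by
      have hD : (0:ℝ) < (2/5) * ((4*x)^(4*r) * (10*x)^(20*r)) := by positivity
      refine le_of_mul_le_mul_right ?_ hD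
      calc (M:ℝ) * ((2/5) * ((4*x)^(4*r) * (10*x)^(20*r)))
          ≤ (M:ℝ) * ((4*x+1)^(4*r+1) * ((10*x-1)^(10*r-1) * (10*x)^(10*r))) :=
            mul_le_mul_of_nonneg_left hprod (Nat.cast_nonneg _)
        _ ≤ (24*x)^(24*r) := hRpow
        _ = (5/2) * ((24:ℝ)^24/((4:ℝ)^4*(10:ℝ)^20))^r *
              ((2/5) * ((4*x)^(4*r) * (10*x)^(20*r))) := by
            simp only [div_pow, mul_pow, ← pow_mul]
            field_simp
            ring
    -- numeric finish
    set Q : ℝ := (24:ℝ)^24/((4:ℝ)^4*(10:ℝ)^20) with hQdef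
    have hQpos : 0 < Q := by rw [hQdef]; positivity
    have hE25 : (2.7182818283:ℝ)^(25:ℕ) ≤ Real.exp 25 := by
      calc (2.7182818283:ℝ)^(25:ℕ) ≤ (Real.exp 1)^(25:ℕ) :=
            pow_le_pow_left₀ (by norm_num) Real.exp_one_gt_d9.le _
        _ = Real.exp 25 := by rw [← Real.exp_nat_mul]; norm_num
    have hQle : Q ≤ (2.7182818283:ℝ)^(25:ℕ) := by rw [hQdef]; norm_num
    have hQ3 : (5/2) * Q^3 < ((2.7182818283:ℝ)^(25:ℕ))^3 := by
      rw [hQdef, ← pow_mul]; norm_num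
    obtain ⟨s, rfl⟩ : ∃ s, r = 3 + s := ⟨r - 3, by omega⟩
    have hfin : (5/2) * Q^(3+s) < Real.exp 25 ^ (3+s) := by
      have hQE : Q ≤ Real.exp 25 := le_trans hQle hE25
      calc (5/2) * Q^(3+s) = ((5/2) * Q^3) * Q^s := by ring
        _ < ((2.7182818283:ℝ)^(25:ℕ))^3 * Q^s := by
            exact mul_lt_mul_of_pos_right hQ3 (pow_pos hQpos s)
        _ ≤ (Real.exp 25)^3 * (Real.exp 25)^s := by
            apply mul_le_mul
            · exact pow_le_pow_left₀ (by positivity) hE25 3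
            · exact pow_le_pow_left₀ hQpos.le hQE s
            · positivity
            · positivity
        _ = Real.exp 25 ^ (3+s) := by rw [← pow_add]
    have hexp : Real.exp 25 ^ (3+s) = Real.exp (25 * x) := by
      rw [hxdef, ← Real.exp_nat_mul]; ring_nf
    calc (M:ℝ) ≤ (5/2) * Q^(3+s) := hMbound
      _ < Real.exp 25 ^ (3+s) := hfin
      _ = Real.exp (25 * x) := hexp
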